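/- Marginal-contribution utilities satisfy the valid utility game conditions: if W is submodular, monotone, and normalized, then MCᵢ(a) := W(a) - W(∅, a_{-i}) satisfies (i) MCᵢ(a) ≥ W(a) - W(∅, a_{-i}) (trivially with equality) and (ii) Σᵢ MCᵢ(a) ≤ W(a). -/

import Mathlib

/-- Marginal-contribution utilities satisfy the valid utility game conditions. -/
theorem mc_is_valid_utility {R : Type*} [DecidableEq R] {n : ℕ}
    (w : Finset R → ℝ)
    (hmono : ∀ S T : Finset R, S ⊆ T → w S ≤ w T)
    (hnorm : w ∅ = 0)
    (hsub : ∀ A B C : Finset R, B ⊆ C → w (A ∪ B) - w B ≥ w (A ∪ C) - w C)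
    (W : (Fin n → Finset R) → ℝ)
    (hW : ∀ a, W a = w (Finset.univ.biUnion a))
    (MC : Fin n → (Fin n → Finset R) → ℝ)
    (hMC : ∀ i a, MC i a = W a - W (Function.update a i ∅))
    (a : Fin n → Finset R) :
    (∀ i, MC i a ≥ W a - W (Function.update a i ∅)) ∧
    (∑ i, MC i a ≤ W a) := by
  constructor
  · intro i; rw [hMC]
  · -- telescoping prefix unions
    set g : ℕ → ℝ := fun k => w ((Finset.univ.filter (fun j : Fin n => (j : ℕ) < k)).biUnion a)
      with hg
    have hstep : ∀ i : Fin n, MC i a ≤ g (i + 1) - g i := by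
      intro i
      set B := (Finset.univ.filter (fun j : Fin n => (j : ℕ) < (i : ℕ))).biUnion a with hB
      set C := (Finset.univ.erase i).biUnion a with hC
      have hBC : B ⊆ C := by
        intro x hx
        simp only [hB, Finset.mem_biUnion, Finset.mem_filter, Finset.mem_univ, true_and] at hx
        obtain ⟨j, hj, hxj⟩ := hx
        exact Finset.mem_biUnion.2 ⟨j, Finset.mem_erase.2 ⟨by
          intro h; subst h; omega, Finset.mem_univ _⟩, hxj⟩
      have h1 : a i ∪ C = Finset.univ.biUnion a := by
        ext x
        simp only [hC, Finset.mem_union, Finset.mem_biUnion, Finset.mem_erase, Finset.mem_univ,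
          true_and, and_true]
        constructor
        · rintro (h | ⟨j, _, h⟩)
          · exact ⟨i, h⟩
          · exact ⟨j, h⟩
        · rintro ⟨j, h⟩
          by_cases hji : j = i
          · subst hji; exact Or.inl h
          · exact Or.inr ⟨j, hji, h⟩
      have h2 : Finset.univ.biUnion (Function.update a i ∅) = C := by
        ext x
        simp only [hC, Finset.mem_biUnion, Finset.mem_univ, true_and, Finset.mem_erase]
        constructor
        · rintro ⟨j, hx⟩
          by_cases hji : j = i
          · subst hji; simp [Function.update_self] at hx
          · exact ⟨j, ⟨hji, trivial⟩, by simpa [Function.update_of_ne hji] using hx⟩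
        · rintro ⟨j, ⟨hji, _⟩, hx⟩
          exact ⟨j, by simpa [Function.update_of_ne hji] using hx⟩
      have h3 : a i ∪ B = (Finset.univ.filter (fun j : Fin n => (j : ℕ) < (i : ℕ) + 1)).biUnion a := by
        ext x
        simp only [hB, Finset.mem_union, Finset.mem_biUnion, Finset.mem_filter, Finset.mem_univ,
          true_and]
        constructor
        · rintro (h | ⟨j, hj, h⟩)
          · exact ⟨i, by omega, h⟩
          · exact ⟨j, by omega, h⟩
        · rintro ⟨j, hj, h⟩
          by_cases hji : (j : ℕ) = (i : ℕ)
          · have : j = i := Fin.ext hji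
            subst this; exact Or.inl h
          · exact Or.inr ⟨j, by omega, h⟩
      have hsubm := hsub (a i) B C hBC
      rw [hMC, hW a, hW (Function.update a i ∅), h2, ← h1]
      calc w (a i ∪ C) - w C ≤ w (a i ∪ B) - w B := hsubm
        _ = g (↑i + 1) - g ↑i := by rw [hg, h3] <;> rfl
    calc ∑ i, MC i a ≤ ∑ i : Fin n, (g (i + 1) - g i) := Finset.sum_le_sum fun i _ => hstep i
      _ = ∑ k ∈ Finset.range n, (g (k + 1) - g k) := Fin.sum_univ_eq_sum_range (fun k => g (k + 1) - g k) n
      _ = g n - g 0 := Finset.sum_range_sub g n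
      _ = W a := by
          rw [hg, hW a]
          have h0 : (Finset.univ.filter (fun j : Fin n => (j : ℕ) < 0)) = ∅ := by
            ext j; simp
          have hn : (Finset.univ.filter (fun j : Fin n => (j : ℕ) < n)) = Finset.univ := by
            ext j; simp [j.isLt]
          simp [h0, hn, hnorm]
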